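/- Let n ≥ 2, k ≥ 1, and for π ∈ CPERMS(n,k) let RANK_n(π) denote the 1-indexed position of π in the listing Rec(1^0 2^0 ⋯ n^0, k). Then for π = p_1 p_2 ⋯ p_n with p_i = v_i^{c_i}, RANK_n(π) = (n·(c_n + 1) − v_n)·k^{n−1}·(n−1)! + RANK_{n−1}(q_1 q_2 ⋯ q_{n−1}), where q_i = (v'_i)^{c'_i} with v'_i = (v_i − v_n) mod n (which lies in {1,…,n−1} since v_i ≠ v_n), c'_i = (c_i − c_n) mod k if v_i < v_n, and c'_i = (c_i − c_n − 1) mod k if v_i > v_n; the base case is RANK_1(v^c) = c + 1. -/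

import Mathlib

/-- Increment the colour of every symbol of a coloured pre-permutation by `s`, modulo `k`. -/
def colShift (k s : ℕ) (p : List (ℕ × ℕ)) : List (ℕ × ℕ) :=
  p.map (fun x => (x.1, (x.2 + s) % k))

/-- The colour-incrementing prefix-reversal of length `j` (a "flip"):
reverse the first `j` symbols and increment their colours by 1 modulo `k`. -/
def cflip (k j : ℕ) (p : List (ℕ × ℕ)) : List (ℕ × ℕ) :=
  colShift k 1 (p.take j).reverse ++ p.drop j

/-- `p` is a `k`-coloured permutation of order `n`: its values are a permutation
of `{1,…,n}` and all its colours lie in `{0,…,k-1}`. -/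
def IsCPerm (n k : ℕ) (p : List (ℕ × ℕ)) : Prop :=
  (p.map Prod.fst).Perm ((List.range n).map (· + 1)) ∧ ∀ x ∈ p, x.2 < k

/-- `p` is a pre-perm: distinct values from `{1,…,n}`, colours in `{0,…,k-1}`. -/
def IsPrePerm (n k : ℕ) (p : List (ℕ × ℕ)) : Prop :=
  (p.map Prod.fst).Nodup ∧ ∀ x ∈ p, (1 ≤ x.1 ∧ x.1 ≤ n) ∧ x.2 < k

/-- The circular string `ρ(p) = p^{+(k-1)} · p^{+(k-2)} ⋯ p^{+0}`. -/
def rho (k : ℕ) (p : List (ℕ × ℕ)) : List (ℕ × ℕ) :=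
  ((List.range k).reverse).flatMap (fun s => colShift k s p)

/-- `ρ(p)_i`: the length `j-1` contiguous subword of the circular string `ρ(p)`
ending with `r_{i-1}` (1-based indices modulo `m = k·j`, where `j = p.length`). -/
def rhoSub (k : ℕ) (p : List (ℕ × ℕ)) (i : ℕ) : List (ℕ × ℕ) :=
  (List.range (p.length - 1)).map
    (fun t => (rho k p).getD ((i + t + k * p.length - p.length) % (k * p.length)) (0, 0))

/-- Fuel-indexed version of the recursive listing `Rec(p,k)`; `fuel = p.length`. -/
def RecAux (k : ℕ) : ℕ → List (ℕ × ℕ) → List (List (ℕ × ℕ))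
  | 0, p => (List.range k).map (fun s => colShift k s p)
  | fuel + 1, p =>
    if p.length ≤ 1 then (List.range k).map (fun s => colShift k s p)
    else ((List.range (k * p.length)).reverse).flatMap
      (fun i => (RecAux k fuel (rhoSub k p (i + 1))).map (fun q => q ++ [(rho k p).getD i (0, 0)]))

/-- The recursive listing `Rec(p,k)`:
`Rec(p₁,k) = p₁, p₁^{+1}, …, p₁^{+(k-1)}` when `p` has length 1, and
`Rec(p,k) = Rec(ρ(p)_m,k)·r_m, Rec(ρ(p)_{m-1},k)·r_{m-1}, …, Rec(ρ(p)_1,k)·r_1` otherwise. -/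
def RecList (k : ℕ) (p : List (ℕ × ℕ)) : List (List (ℕ × ℕ)) :=
  RecAux k p.length p

/-- The identity coloured permutation `1⁰2⁰⋯n⁰`. -/
def idPerm (n : ℕ) : List (ℕ × ℕ) := (List.range n).map (fun i => (i + 1, 0))

/-- `rankL k n π`: the 1-indexed position of `π` in the listing `Rec(1⁰2⁰⋯n⁰, k)`. -/
def rankL (k n : ℕ) (π : List (ℕ × ℕ)) : ℕ :=
  (RecList k (idPerm n)).idxOf π + 1

lemma length_colShift (k s : ℕ) (p : List (ℕ × ℕ)) : (colShift k s p).length = p.length := by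
  simp [colShift]

lemma length_rho (k : ℕ) (p : List (ℕ × ℕ)) : (rho k p).length = k * p.length := by
  simp [rho, List.length_flatMap, Function.comp_def, length_colShift, List.map_const',
    List.sum_replicate, mul_comm]

lemma length_rhoSub (k i : ℕ) (p : List (ℕ × ℕ)) : (rhoSub k p i).length = p.length - 1 := by
  simp [rhoSub]

lemma getD_flatMap_rev (f : ℕ → List (ℕ × ℕ)) (n : ℕ) (hf : ∀ s, (f s).length = n)
    {k t : ℕ} (ht : t < k * n) :
    (((List.range k).reverse).flatMap f).getD t (0,0) = (f (k - 1 - t / n)).getD (t % n) (0,0) := by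
  induction k generalizing t with
  | zero => simp at ht
  | succ k ih =>
    have hkn : (k+1) * n = k * n + n := by ring
    have hn : 0 < n := by
      rcases Nat.eq_zero_or_pos n with h|h
      · subst h; simp at ht
      · exact h
    rw [List.range_succ, List.reverse_append]
    simp only [List.reverse_singleton, List.singleton_append, List.flatMap_cons]
    by_cases h : t < n
    · rw [List.getD_append _ _ _ _ (by rw [hf]; exact h)]
      rw [Nat.div_eq_of_lt h, Nat.mod_eq_of_lt h]
      simp
    · push_neg at h
      rw [List.getD_append_right _ _ _ _ (by rw [hf]; exact h), hf]
      have h2 : t - n < k * n := by omega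
      rw [ih h2]
      have e1 : t = n + (t - n) := by omega
      have e2 : t / n = (t - n) / n + 1 := by
        conv_lhs => rw [e1]
        rw [Nat.add_div_left _ hn]
      have e3 : t % n = (t - n) % n := by
        conv_lhs => rw [e1]
        rw [Nat.add_mod_left]
      rw [e2, e3]
      congr 2
      have : (t - n) / n < k := by
        exact Nat.div_lt_iff_lt_mul hn |>.mpr (by omega)
      omega

lemma rho_getD (k : ℕ) (p : List (ℕ × ℕ)) {t : ℕ} (ht : t < k * p.length) :
    (rho k p).getD t (0,0) =
      ((p.getD (t % p.length) (0,0)).1,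
       ((p.getD (t % p.length) (0,0)).2 + (k - 1 - t / p.length)) % k) := by
  have hp : 0 < p.length := by
    rcases Nat.eq_zero_or_pos p.length with h|h
    · rw [h] at ht; simp at ht
    · exact h
  rw [rho, getD_flatMap_rev _ _ (fun s => length_colShift k s p) ht]
  have hm : t % p.length < p.length := Nat.mod_lt _ hp
  rw [List.getD_eq_getElem _ _ (by rw [length_colShift]; exact hm),
      List.getD_eq_getElem _ _ hm]
  simp [colShift]

section equivariance

variable (k : ℕ) (f s : ℕ → ℕ)

def phiMap (k : ℕ) (f s : ℕ → ℕ) : ℕ × ℕ → ℕ × ℕ := fun x => (f x.1, (x.2 + s x.1) % k)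

lemma colShift_map (t : ℕ) (p : List (ℕ × ℕ)) :
    colShift k t (p.map (phiMap k f s)) = (colShift k t p).map (phiMap k f s) := by
  simp only [colShift, List.map_map]
  apply List.map_congr_left
  intro x _
  simp only [Function.comp, phiMap]
  refine Prod.ext rfl ?_
  simp only []
  conv_lhs => rw [Nat.mod_add_mod]
  conv_rhs => rw [Nat.mod_add_mod]
  ring_nf

lemma rho_map (p : List (ℕ × ℕ)) :
    rho k (p.map (phiMap k f s)) = (rho k p).map (phiMap k f s) := by
  rw [rho, rho, List.map_flatMap]
  congr 1
  funext t
  exact colShift_map k f s t p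

lemma rhoSub_map (hk : 1 ≤ k) (p : List (ℕ × ℕ)) (i : ℕ) :
    rhoSub k (p.map (phiMap k f s)) i = (rhoSub k p i).map (phiMap k f s) := by
  rcases Nat.eq_zero_or_pos p.length with hp|hp
  · have : p = [] := List.length_eq_zero_iff.mp hp
    subst this; simp [rhoSub]
  rw [rhoSub, rhoSub, List.map_map, List.length_map]
  apply List.map_congr_left
  intro t _
  simp only [Function.comp]
  rw [rho_map]
  have hlt : (i + t + k * p.length - p.length) % (k * p.length) < k * p.length :=
    Nat.mod_lt _ (by positivity)
  rw [List.getD_eq_getElem _ _ (by rw [List.length_map, length_rho]; exact hlt),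
      List.getD_eq_getElem _ _ (by rw [length_rho]; exact hlt),
      List.getElem_map]

end equivariance

lemma recAux_map (k : ℕ) (hk : 1 ≤ k) (f s : ℕ → ℕ) :
    ∀ fuel (p : List (ℕ × ℕ)),
      RecAux k fuel (p.map (phiMap k f s)) = (RecAux k fuel p).map (List.map (phiMap k f s)) := by
  intro fuel
  induction fuel with
  | zero =>
    intro p
    simp only [RecAux, List.map_map]
    apply List.map_congr_left
    intro t _
    exact colShift_map k f s t p
  | succ fuel ih =>
    intro p
    simp only [RecAux, List.length_map]
    by_cases h : p.length ≤ 1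
    · rw [if_pos h, if_pos h, List.map_map]
      apply List.map_congr_left
      intro t _
      exact colShift_map k f s t p
    · rw [if_neg h, if_neg h, List.map_flatMap]
      apply List.flatMap_congr
      intro i hi0
      have hi : i < k * p.length := by
        rw [List.mem_reverse, List.mem_range] at hi0; exact hi0
      rw [rhoSub_map k f s hk, ih, List.map_map, List.map_map]
      apply List.map_congr_left
      intro q _
      simp only [Function.comp, List.map_append, List.map_cons, List.map_nil]
      congr 1
      rw [rho_map]
      rw [List.getD_eq_getElem _ _ (by rw [List.length_map, length_rho]; exact hi),
          List.getD_eq_getElem _ _ (by rw [length_rho]; exact hi), List.getElem_map]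

lemma length_recAux (k : ℕ) : ∀ (j : ℕ) (p : List (ℕ × ℕ)), p.length = j → 1 ≤ j →
    (RecAux k j p).length = k ^ j * j.factorial := by
  intro j
  induction j with
  | zero => omega
  | succ j ih =>
    intro p hp _
    rcases Nat.eq_zero_or_pos j with hj|hj
    · subst hj
      simp only [RecAux]
      rw [if_pos (by omega)]
      simp [Nat.factorial]
    · simp only [RecAux]
      rw [if_neg (by omega), List.length_flatMap]
      have hc : ∀ i : ℕ, ((List.length ∘ fun i => (RecAux k j (rhoSub k p (i + 1))).map
          (fun q => q ++ [(rho k p).getD i (0, 0)])) i) = k ^ j * j.factorial := by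
        intro i
        simp only [Function.comp, List.length_map]
        exact ih (rhoSub k p (i+1)) (by rw [length_rhoSub, hp]; omega) hj
      rw [show (fun i => ((RecAux k j (rhoSub k p (i + 1))).map (fun q => q ++ [(rho k p).getD i (0, 0)])).length) = fun _ => k ^ j * j.factorial from funext hc, List.map_const', List.sum_replicate]
      simp only [List.length_reverse, List.length_range, smul_eq_mul, hp]
      rw [Nat.factorial_succ, pow_succ]
      ring

lemma rhoSub_snoc_vals (k : ℕ) (hk : 1 ≤ k) (p : List (ℕ × ℕ)) (hp : 1 ≤ p.length)
    {i : ℕ} (hi : i < k * p.length) :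
    (rhoSub k p (i+1) ++ [(rho k p).getD i (0,0)]).map Prod.fst
      = (p.map Prod.fst).rotate ((i+1) % p.length) := by
  have hkn : 0 < k * p.length := by positivity
  have hdvd : p.length ∣ k * p.length := dvd_mul_left p.length k
  have hmod : ∀ a : ℕ, (a + k * p.length - p.length) % (k * p.length) % p.length
      = a % p.length := by
    intro a
    rw [Nat.mod_mod_of_dvd _ hdvd]
    have h2 : a + k * p.length - p.length = a + (k - 1) * p.length := by
      have h3 : k * p.length = (k-1) * p.length + p.length := by
        obtain ⟨e, rfl⟩ := Nat.exists_eq_add_of_le hk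
        have h4 : 1 + e - 1 = e := by omega
        rw [h4]; ring
      omega
    rw [h2, Nat.add_mul_mod_self_right]
  apply List.ext_getElem
  · simp [length_rhoSub, List.length_rotate]
    omega
  · intro t h1 h2
    simp only [List.length_map, List.length_append, length_rhoSub, List.length_singleton] at h1
    rw [List.getElem_rotate]
    simp only [List.length_map, List.getElem_map]
    have hidx : (t + (i+1) % p.length) % p.length = (i + 1 + t) % p.length := by
      rw [Nat.add_mod_mod]; congr 1; omega
    simp only [hidx]
    by_cases ht : t < p.length - 1
    · rw [List.getElem_append_left (by rw [length_rhoSub]; exact ht)]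
      have he : (rhoSub k p (i+1))[t]'(by rw [length_rhoSub]; exact ht)
          = (rho k p).getD ((i + 1 + t + k * p.length - p.length) % (k * p.length)) (0,0) := by
        simp only [rhoSub, List.getElem_map, List.getElem_range]
      rw [he, rho_getD k p (Nat.mod_lt _ hkn), hmod,
          List.getD_eq_getElem _ _ (Nat.mod_lt _ (by omega))]
    · have hlen : (rhoSub k p (i+1)).length ≤ t := by rw [length_rhoSub]; omega
      rw [List.getElem_append_right hlen, List.getElem_singleton, rho_getD k p hi]
      have hidx2 : (i + 1 + t) % p.length = i % p.length := by
        have h5 : i + 1 + t = i + p.length := by omega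
        rw [h5, Nat.add_mod_right]
      simp only [hidx2]
      rw [List.getD_eq_getElem _ _ (Nat.mod_lt _ (by omega))]

lemma recAux_mem (k : ℕ) (hk : 1 ≤ k) :
    ∀ (j : ℕ) (p q : List (ℕ × ℕ)), p.length = j → q ∈ RecAux k j p →
      (q.map Prod.fst).Perm (p.map Prod.fst) ∧ ∀ x ∈ q, x.2 < k := by
  intro j
  induction j with
  | zero =>
    intro p q hp hq
    have hp' : p = [] := List.length_eq_zero_iff.mp hp
    subst hp'
    simp only [RecAux, List.mem_map] at hq
    obtain ⟨s, -, rfl⟩ := hq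
    simp [colShift]
  | succ j ih =>
    intro p q hp hq
    simp only [RecAux] at hq
    by_cases h1 : p.length ≤ 1
    · rw [if_pos h1] at hq
      simp only [List.mem_map] at hq
      obtain ⟨s, -, rfl⟩ := hq
      constructor
      · simp [colShift, List.map_map]
        exact List.Perm.refl _
      · intro x hx
        simp only [colShift, List.mem_map] at hx
        obtain ⟨y, -, rfl⟩ := hx
        exact Nat.mod_lt _ hk
    · rw [if_neg h1] at hq
      rw [List.mem_flatMap] at hq
      obtain ⟨i, hi, hq⟩ := hq
      rw [List.mem_reverse, List.mem_range] at hi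
      rw [List.mem_map] at hq
      obtain ⟨q', hq', rfl⟩ := hq
      obtain ⟨hperm, hcol⟩ := ih (rhoSub k p (i+1)) q' (by rw [length_rhoSub]; omega) hq'
      have hrot := rhoSub_snoc_vals k hk p (by omega) hi
      constructor
      · have h2 : ((q' ++ [(rho k p).getD i (0,0)]).map Prod.fst)
            = q'.map Prod.fst ++ [((rho k p).getD i (0,0)).1] := by simp
        rw [h2]
        refine List.Perm.trans (List.Perm.append_right _ hperm) ?_
        have h3 : (rhoSub k p (i+1)).map Prod.fst ++ [((rho k p).getD i (0,0)).1]
            = (rhoSub k p (i+1) ++ [(rho k p).getD i (0,0)]).map Prod.fst := by simp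
        rw [h3, hrot]
        exact List.rotate_perm _ _
      · intro x hx
        rw [List.mem_append] at hx
        rcases hx with hx | hx
        · exact hcol x hx
        · rw [List.mem_singleton] at hx
          subst hx
          rw [rho_getD k p hi]
          exact Nat.mod_lt _ hk

lemma recAux_complete (k : ℕ) (hk : 1 ≤ k) :
    ∀ (j : ℕ) (p q : List (ℕ × ℕ)), p.length = j → q.length = j →
      (q.map Prod.fst).Perm (p.map Prod.fst) → (∀ x ∈ q, x.2 < k) →
      q ∈ RecAux k j p := by
  intro j
  induction j with
  | zero =>
    intro p q hp hq _ _
    have hp' : p = [] := List.length_eq_zero_iff.mp hp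
    have hq' : q = [] := List.length_eq_zero_iff.mp hq
    subst hp'; subst hq'
    simp only [RecAux, List.mem_map]
    exact ⟨0, by simp; omega, by simp [colShift]⟩
  | succ j ih =>
    intro p q hp hq hperm hcol
    rcases Nat.eq_zero_or_pos j with hj | hj
    · -- length 1
      subst hj
      obtain ⟨x, rfl⟩ := List.length_eq_one_iff.mp hq
      obtain ⟨y, rfl⟩ := List.length_eq_one_iff.mp hp
      have hv : x.1 = y.1 := by
        have := List.Perm.mem_iff (a := x.1) hperm
        simp at this
        exact this
      have hc : x.2 < k := hcol x (by simp)
      simp only [RecAux, List.length_singleton, if_pos (le_refl 1), List.mem_map]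
      refine ⟨(x.2 + (k-1) * y.2) % k, by simp [Nat.mod_lt _ hk, hk], ?_⟩
      simp only [colShift, List.map_singleton]
      have : (y.2 + (x.2 + (k - 1) * y.2) % k) % k = x.2 := by
        rw [Nat.add_mod_mod]
        have h2 : y.2 + (x.2 + (k - 1) * y.2) = x.2 + k * y.2 := by
          have : (k-1) * y.2 + y.2 = k * y.2 := by
            obtain ⟨e, rfl⟩ := Nat.exists_eq_add_of_le hk
            have h4 : 1 + e - 1 = e := by omega
            rw [h4]; ring
          omega
        rw [h2, Nat.add_mul_mod_self_left, Nat.mod_eq_of_lt hc]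
      rw [this, ← hv]
    · -- length ≥ 2
      have hq0 : q ≠ [] := by intro h; subst h; simp at hq
      obtain ⟨q', x, rfl⟩ : ∃ q' x, q = q' ++ [x] :=
        ⟨q.dropLast, q.getLast hq0, (List.dropLast_append_getLast hq0).symm⟩
      -- find position of the value x.1 in p
      have hx1 : x.1 ∈ p.map Prod.fst := by
        refine hperm.mem_iff.mp ?_
        simp
      obtain ⟨t₀, ht₀, hpt⟩ : ∃ t₀, ∃ h : t₀ < p.length, (p[t₀]).1 = x.1 := by
        rw [List.mem_map] at hx1
        obtain ⟨y, hy, hxy⟩ := hx1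
        obtain ⟨t₀, ht, hyt⟩ := List.mem_iff_getElem.mp hy
        exact ⟨t₀, ht, by rw [hyt, hxy]⟩
      set cp := (p[t₀]'ht₀).2 with hcp
      set e := (x.2 + (k-1) * cp) % k with he
      have he' : e < k := Nat.mod_lt _ hk
      set i := p.length * (k - 1 - e) + t₀ with hi_def
      have hxc : x.2 < k := hcol x (by simp)
      have hi : i < k * p.length := by
        have h5 : k - 1 - e ≤ k - 1 := by omega
        have h6 : p.length * (k - 1 - e) ≤ p.length * (k-1) := Nat.mul_le_mul_left _ h5
        have h7 : p.length * (k-1) + p.length = p.length * k := by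
          obtain ⟨e', rfl⟩ := Nat.exists_eq_add_of_le hk
          have h8 : 1 + e' - 1 = e' := by omega
          rw [h8]; ring
        have := mul_comm k p.length
        omega
      have hidiv : i / p.length = k - 1 - e := by
        rw [hi_def, Nat.mul_add_div (by omega), Nat.div_eq_of_lt ht₀, Nat.add_zero]
      have himod : i % p.length = t₀ := by
        rw [hi_def, Nat.mul_add_mod, Nat.mod_eq_of_lt ht₀]
      have hrix : (rho k p).getD i (0,0) = x := by
        rw [rho_getD k p hi, himod, hidiv]
        have h9 : k - 1 - (k - 1 - e) = e := by omega
        rw [h9]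
        rw [List.getD_eq_getElem _ _ ht₀, hpt]
        refine Prod.ext rfl ?_
        simp only [he]
        rw [Nat.add_mod_mod]
        have h10 : (p[t₀]'ht₀).2 + (x.2 + (k - 1) * cp) = x.2 + k * cp := by
          have : (k-1) * cp + cp = k * cp := by
            obtain ⟨e', rfl⟩ := Nat.exists_eq_add_of_le hk
            have h11 : 1 + e' - 1 = e' := by omega
            rw [h11]; ring
          omega
        rw [h10, Nat.add_mul_mod_self_left, Nat.mod_eq_of_lt hxc]
      -- q' is in the recursive list for rhoSub
      have hrot := rhoSub_snoc_vals k hk p (by omega) hi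
      have hq'perm : (q'.map Prod.fst).Perm ((rhoSub k p (i+1)).map Prod.fst) := by
        rw [← List.perm_append_right_iff [x.1]]
        have h12 : q'.map Prod.fst ++ [x.1] = (q' ++ [x]).map Prod.fst := by simp
        have h13 : (rhoSub k p (i+1)).map Prod.fst ++ [x.1]
            = (rhoSub k p (i+1) ++ [(rho k p).getD i (0,0)]).map Prod.fst := by
          rw [List.map_append, hrix]
          simp
        rw [h12, h13, hrot]
        exact hperm.trans (List.rotate_perm _ _).symm
      have hq'mem : q' ∈ RecAux k j (rhoSub k p (i+1)) := by
        refine ih _ _ (by rw [length_rhoSub]; omega) ?_ hq'perm ?_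
        · have := hq
          simp only [List.length_append, List.length_singleton] at this
          omega
        · intro y hy
          exact hcol y (by simp [hy])
      simp only [RecAux]
      rw [if_neg (by omega)]
      rw [List.mem_flatMap]
      refine ⟨i, by rw [List.mem_reverse, List.mem_range]; exact hi, ?_⟩
      rw [List.mem_map]
      exact ⟨q', hq'mem, by rw [hrix]⟩

lemma my_indexOf_cons {α : Type} [BEq α] [LawfulBEq α] [DecidableEq α] (b a : α) (l : List α) :
    (b :: l).idxOf a = if b = a then 0 else l.idxOf a + 1 := by
  rw [List.idxOf_cons]
  by_cases h : b = a
  · rw [if_pos h]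
    have hb : (b == a) = true := beq_iff_eq.mpr h
    rw [hb, cond_true]
  · rw [if_neg h]
    have hb : (b == a) = false := beq_eq_false_iff_ne.mpr h
    rw [hb, cond_false]

lemma indexOf_append_of_not_mem' {α : Type} [BEq α] [LawfulBEq α] [DecidableEq α] {l₁ l₂ : List α} {a : α}
    (h : a ∉ l₁) : (l₁ ++ l₂).idxOf a = l₁.length + l₂.idxOf a := by
  induction l₁ with
  | nil => simp
  | cons b t ih =>
    rw [List.cons_append, my_indexOf_cons,
      if_neg (fun e => h (by rw [e]; exact List.mem_cons_self)),
      ih (fun hm => h (List.mem_cons_of_mem _ hm))]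
    simp only [List.length_cons]
    omega

lemma indexOf_append_of_mem' {α : Type} [BEq α] [LawfulBEq α] [DecidableEq α] {l₁ l₂ : List α} {a : α}
    (h : a ∈ l₁) : (l₁ ++ l₂).idxOf a = l₁.idxOf a := by
  induction l₁ with
  | nil => simp at h
  | cons b t ih =>
    rw [List.cons_append, my_indexOf_cons, my_indexOf_cons]
    by_cases hb : b = a
    · rw [if_pos hb, if_pos hb]
    · have h1 : a ∈ t := by
        rcases List.mem_cons.mp h with h1|h1
        · exact absurd h1.symm hb
        · exact h1
      rw [if_neg hb, if_neg hb, ih h1]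

lemma indexOf_map_of_inj {α β : Type} [BEq α] [LawfulBEq α] [DecidableEq α] [BEq β] [LawfulBEq β] [DecidableEq β]
    (g : α → β) (L : List α) (a : α) (h : ∀ b ∈ L, g b = g a → b = a) :
    (L.map g).idxOf (g a) = L.idxOf a := by
  induction L with
  | nil => simp
  | cons b L ih =>
    rw [List.map_cons, my_indexOf_cons, my_indexOf_cons]
    by_cases hb : b = a
    · rw [if_pos hb, if_pos (by rw [hb])]
    · rw [if_neg hb, if_neg (fun e => hb (h b (List.mem_cons_self) e)),
        ih (fun c hc => h c (List.mem_cons_of_mem _ hc))]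

lemma indexOf_range {c k : ℕ} (h : c < k) : (List.range k).idxOf c = c := by
  induction k with
  | zero => omega
  | succ k ih =>
    rw [List.range_succ]
    by_cases hc : c < k
    · rw [indexOf_append_of_mem' (by simpa using hc)]
      exact ih hc
    · have hc' : c = k := by omega
      subst hc'
      rw [indexOf_append_of_not_mem' (by simp), my_indexOf_cons]
      simp

lemma map_eq_map_inj_on {α β : Type} (φ : α → β) :
    ∀ (a b : List α), (∀ x ∈ a, ∀ y ∈ b, φ x = φ y → x = y) →
      a.map φ = b.map φ → a = b := by
  intro a
  induction a with
  | nil =>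
    intro b _ hm
    exact (List.map_eq_nil_iff.mp hm.symm).symm
  | cons x a ih =>
    intro b h hm
    cases b with
    | nil => simp at hm
    | cons y b =>
      simp only [List.map_cons, List.cons.injEq] at hm
      have hxy : x = y := h x (by simp) y (by simp) hm.1
      subst hxy
      rw [ih b (fun u hu v hv => h u (by simp [hu]) v (by simp [hv])) hm.2]

lemma mod_cancel_eq {n a b : ℕ} (hn : 0 < n) (hab : a ≤ b) (hd : b - a < n)
    (h : a % n = b % n) : a = b := by
  have h1 : (b - a) % n = 0 := Nat.sub_mod_eq_zero_of_mod_eq h.symm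
  rw [Nat.mod_eq_of_lt hd] at h1
  omega

lemma phi_inj (k n v : ℕ) (hk : 1 ≤ k) (hv : v ≤ n) (s : ℕ → ℕ)
    (a b : ℕ × ℕ) (ha1 : 1 ≤ a.1) (ha2 : a.1 ≤ n) (hac : a.2 < k)
    (hb1 : 1 ≤ b.1) (hb2 : b.1 ≤ n) (hbc : b.2 < k)
    (h : phiMap k (fun u => (u + n - v) % n) s a = phiMap k (fun u => (u + n - v) % n) s b) :
    a = b := by
  simp only [phiMap, Prod.mk.injEq] at h
  obtain ⟨h1, h2⟩ := h
  have hn : 0 < n := by omega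
  have hval : a.1 = b.1 := by
    rcases le_total (a.1 + n - v) (b.1 + n - v) with hle | hle
    · have := mod_cancel_eq hn hle (by omega) h1
      omega
    · have := mod_cancel_eq hn hle (by omega) h1.symm
      omega
  refine Prod.ext hval ?_
  rw [hval] at h2
  have h3 : a.2 % k = b.2 % k := Nat.ModEq.add_right_cancel' (s b.1) h2
  rwa [Nat.mod_eq_of_lt hac, Nat.mod_eq_of_lt hbc] at h3

lemma length_idPerm (n : ℕ) : (idPerm n).length = n := by simp [idPerm]

lemma rho_idPerm_getD (k n : ℕ) {t : ℕ} (ht : t < k * n) :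
    (rho k (idPerm n)).getD t (0,0) = (t % n + 1, k - 1 - t / n) := by
  have hn : 0 < n := by
    rcases Nat.eq_zero_or_pos n with h|h
    · subst h; simp at ht
    · exact h
  have hlen : (idPerm n).length = n := length_idPerm n
  rw [rho_getD k _ (by rw [hlen]; exact ht), hlen]
  have hm : t % n < n := Nat.mod_lt _ hn
  have hk : 0 < k := by
    rcases Nat.eq_zero_or_pos k with h|h
    · subst h; simp at ht
    · exact h
  have hd : t / n < k := Nat.div_lt_of_lt_mul (by rw [mul_comm] at ht; exact ht)
  rw [List.getD_eq_getElem _ _ (by rw [hlen]; exact hm)]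
  simp only [idPerm, List.getElem_map, List.getElem_range]
  refine Prod.ext rfl ?_
  simp only []
  rw [Nat.zero_add, Nat.mod_eq_of_lt
    (Nat.lt_of_le_of_lt (Nat.sub_le (k-1) (t/n)) (by omega))]

lemma rhoSub_idPerm_map (k n v c : ℕ) (hk : 1 ≤ k) (hn : 2 ≤ n)
    (hv1 : 1 ≤ v) (hvn : v ≤ n) (hc : c < k) :
    (rhoSub k (idPerm n) ((k-1-c)*n + (v-1) + 1)).map
      (phiMap k (fun u => (u + n - v) % n) (fun u => if u < v then k - c else k - c - 1))
      = idPerm (n-1) := by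
  obtain ⟨e, hke⟩ : ∃ e, k = c + 1 + e := ⟨k - c - 1, by omega⟩
  have hkn : k * n = c*n + n + e*n := by rw [hke]; ring
  have he1 : k - 1 - c = e := by omega
  have he2 : k - c = e + 1 := by omega
  have he3 : k - c - 1 = e := by omega
  apply List.ext_getElem
  · simp [length_rhoSub, length_idPerm, idPerm]
  · intro t h1 h2
    simp only [List.length_map, length_rhoSub, length_idPerm] at h1
    have hrhs : (idPerm (n-1))[t]'h2 = (t+1, 0) := by
      simp [idPerm]
    rw [hrhs]
    rw [List.getElem_map]
    have hsub : (rhoSub k (idPerm n) ((k-1-c)*n + (v-1) + 1))[t]'(by rw [length_rhoSub, length_idPerm]; exact h1)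
        = (rho k (idPerm n)).getD
          ((((k-1-c)*n + (v-1) + 1) + t + k * n - n) % (k * n)) (0,0) := by
      simp only [rhoSub, List.getElem_map, List.getElem_range, length_idPerm]
    rw [hsub, he1]
    set A := (e*n + (v-1) + 1) + t + k * n - n with hA
    by_cases hcase : v + t < n
    · by_cases hce : e = 0
      · have hposA : A = n*(c+e) + (v+t) := by
          subst hce
          have : n*(c+0) = c*n := by ring
          omega
        have hApos : A < k * n := by
          have h6 : n*(c+e) = c*n + e*n := by ring
          omega
        rw [Nat.mod_eq_of_lt hApos, hposA]
        rw [rho_idPerm_getD k n (by rw [← hposA]; exact hApos)]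
        rw [Nat.mul_add_mod, Nat.mod_eq_of_lt hcase,
            Nat.mul_add_div (by omega), Nat.div_eq_of_lt hcase, Nat.add_zero]
        simp only [phiMap]
        have hval : (v + t + 1 + n - v) % n = t + 1 := by
          have h7 : v + t + 1 + n - v = n + (t+1) := by omega
          rw [h7, Nat.add_mod_left, Nat.mod_eq_of_lt (by omega)]
        rw [if_neg (by omega)]
        refine Prod.ext (by simpa using hval) ?_
        show (k - 1 - (c + e) + (k - c - 1)) % k = 0
        have h8 : k - 1 - (c + e) + (k - c - 1) = 0 := by omega
        rw [h8, Nat.zero_mod]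
      · have hposA : A = k*n + (n*(e-1) + (v+t)) := by
          have h9 : n*(e-1) + n = e*n := by
            obtain ⟨e', rfl⟩ : ∃ e', e = e' + 1 := ⟨e - 1, by omega⟩
            have : n*(e'+1-1) = n*e' := by norm_num
            rw [this]; ring
          omega
        have hB : n*(e-1) + (v+t) < k*n := by
          have h10 : n*(e-1) + n = e*n := by
            obtain ⟨e', rfl⟩ : ∃ e', e = e' + 1 := ⟨e - 1, by omega⟩
            have : n*(e'+1-1) = n*e' := by norm_num
            rw [this]; ring
          omega
        rw [hposA, Nat.add_mod_left, Nat.mod_eq_of_lt hB]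
        rw [rho_idPerm_getD k n hB]
        rw [Nat.mul_add_mod, Nat.mod_eq_of_lt hcase,
            Nat.mul_add_div (by omega), Nat.div_eq_of_lt hcase, Nat.add_zero]
        simp only [phiMap]
        have hval : (v + t + 1 + n - v) % n = t + 1 := by
          have h7 : v + t + 1 + n - v = n + (t+1) := by omega
          rw [h7, Nat.add_mod_left, Nat.mod_eq_of_lt (by omega)]
        rw [if_neg (by omega)]
        refine Prod.ext (by simpa using hval) ?_
        show (k - 1 - (e - 1) + (k - c - 1)) % k = 0
        have h8 : k - 1 - (e - 1) + (k - c - 1) = k := by omega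
        rw [h8, Nat.mod_self]
    · push_neg at hcase
      have hposA : A = k*n + (n*e + (v+t-n)) := by
        have : n*e = e*n := by ring
        omega
      have hB : n*e + (v+t-n) < k*n := by
        have h12 : n*e = e*n := by ring
        omega
      rw [hposA, Nat.add_mod_left, Nat.mod_eq_of_lt hB]
      rw [rho_idPerm_getD k n hB]
      have hr : v + t - n < n := by omega
      rw [Nat.mul_add_mod, Nat.mod_eq_of_lt hr,
          Nat.mul_add_div (by omega), Nat.div_eq_of_lt hr, Nat.add_zero]
      simp only [phiMap]
      rw [if_pos (by omega)]
      have hval : (v + t - n + 1 + n - v) % n = t + 1 := by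
        have h7 : v + t - n + 1 + n - v = t + 1 := by omega
        rw [h7, Nat.mod_eq_of_lt (by omega)]
      refine Prod.ext (by simpa using hval) ?_
      show (k - 1 - e + (k - c)) % k = 0
      have h8 : k - 1 - e + (k - c) = k := by omega
      rw [h8, Nat.mod_self]

lemma vals_idPerm (n : ℕ) : (idPerm n).map Prod.fst = (List.range n).map (· + 1) := by
  simp [idPerm]

/-- For `n ≥ 2`, `k ≥ 1` and `π = p₁⋯pₙ ∈ CPERMS(n,k)` with
`pᵢ = vᵢ^{cᵢ}`, the rank of `π` in `Rec(1⁰2⁰⋯n⁰,k)` satisfies the recursion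
`RANK_n(π) = (n(cₙ+1) - vₙ)·k^{n-1}·(n-1)! + RANK_{n-1}(q₁⋯q_{n-1})`, where
`v'ᵢ = (vᵢ - vₙ) mod n`, and `c'ᵢ = (cᵢ - cₙ) mod k` if `vᵢ < vₙ`, and
`c'ᵢ = (cᵢ - cₙ - 1) mod k` if `vᵢ > vₙ`; the base case is `RANK₁(1^c) = c + 1`. -/
theorem rank_recursion (n k : ℕ) (hn : 2 ≤ n) (hk : 1 ≤ k)
    (π : List (ℕ × ℕ)) (hπ : IsCPerm n k π) :
    (∀ c < k, rankL k 1 [(1, c)] = c + 1) ∧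
    rankL k n π =
      (n * ((π.getD (n - 1) (0, 0)).2 + 1) - (π.getD (n - 1) (0, 0)).1) *
          (k ^ (n - 1) * (n - 1).factorial) +
        rankL k (n - 1) ((π.take (n - 1)).map (fun x =>
          ((x.1 + n - (π.getD (n - 1) (0, 0)).1) % n,
            if x.1 < (π.getD (n - 1) (0, 0)).1 then
              (x.2 + k - (π.getD (n - 1) (0, 0)).2) % k
            else (x.2 + k - (π.getD (n - 1) (0, 0)).2 - 1) % k))) := by
  obtain ⟨hperm, hcol⟩ := hπ
  constructor
  · -- base case
    intro c hc
    show (RecList k (idPerm 1)).idxOf [(1,c)] + 1 = c + 1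
    congr 1
    rw [RecList, length_idPerm]
    have hid1 : idPerm 1 = [(1,0)] := by simp [idPerm, List.range_succ]
    simp only [RecAux]
    rw [if_pos (by simp [length_idPerm])]
    have h2 : ∀ s ∈ List.range k, colShift k s (idPerm 1) = [(1, s)] := by
      intro s hs
      rw [List.mem_range] at hs
      rw [hid1]
      simp [colShift, Nat.mod_eq_of_lt hs]
    rw [List.map_congr_left h2]
    have h3 : [((1:ℕ), c)] = (fun s => [((1:ℕ), s)]) c := rfl
    rw [h3]
    exact (indexOf_map_of_inj (fun s => [((1:ℕ), s)]) (List.range k) c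
      (by intro b _ hb; simpa using hb)).trans (indexOf_range hc)
  · obtain ⟨m, rfl⟩ : ∃ m, n = m + 1 := ⟨n-1, by omega⟩
    have hm1 : 1 ≤ m := by omega
    simp only [Nat.add_sub_cancel]
    have hlen : π.length = m + 1 := by
      have := hperm.length_eq
      simpa using this
    have hn1 : m < π.length := by omega
    set x := π.getD m (0,0) with hxdef
    have hxe : x = π[m]'hn1 := by rw [hxdef, List.getD_eq_getElem _ _ hn1]
    have hxmem : x ∈ π := by rw [hxe]; exact List.getElem_mem _
    have hsplitπ : π = π.take m ++ [x] := by
      conv_lhs => rw [← List.take_append_drop m π]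
      congr 1
      rw [List.drop_eq_getElem_cons hn1, ← hxe, List.drop_eq_nil_of_le (by omega)]
    have hxv : 1 ≤ x.1 ∧ x.1 ≤ m + 1 := by
      have hx1 : x.1 ∈ π.map Prod.fst := List.mem_map_of_mem hxmem
      have := hperm.mem_iff.mp hx1
      simp only [List.mem_map, List.mem_range] at this
      obtain ⟨i, hi, hie⟩ := this
      omega
    have hxc : x.2 < k := hcol x hxmem
    have hnodup : (π.map Prod.fst).Nodup := by
      refine hperm.nodup_iff.mpr ?_
      exact (List.nodup_range (n := m+1)).map (fun a b h => by omega)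
    set i₀ := (k-1-x.2)*(m+1) + (x.1 - 1) with hi₀def
    obtain ⟨e, hke⟩ : ∃ e, k = x.2 + 1 + e := ⟨k - x.2 - 1, by omega⟩
    have hkn : k * (m+1) = x.2*(m+1) + (m+1) + e*(m+1) := by rw [hke]; ring
    have he1 : k - 1 - x.2 = e := by omega
    have hi₀ : i₀ < k * (m+1) := by
      have h1 : i₀ = e*(m+1) + (x.1 - 1) := by rw [hi₀def, he1]
      omega
    have hri₀ : (rho k (idPerm (m+1))).getD i₀ (0,0) = x := by
      rw [rho_idPerm_getD k (m+1) hi₀]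
      have hcm : e*(m+1) = (m+1)*e := mul_comm _ _
      have hmod : i₀ % (m+1) = x.1 - 1 := by
        rw [hi₀def, he1, hcm, Nat.mul_add_mod, Nat.mod_eq_of_lt (by omega)]
      have hdiv : i₀ / (m+1) = e := by
        rw [hi₀def, he1, hcm, Nat.mul_add_div (by omega), Nat.div_eq_of_lt (by omega),
          Nat.add_zero]
      rw [hmod, hdiv]
      have hx1 : x.1 - 1 + 1 = x.1 := by omega
      have hx2 : k - 1 - e = x.2 := by omega
      rw [hx1, hx2]
    -- unfold the rank
    rw [rankL, RecList, length_idPerm]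
    simp only [RecAux]
    rw [if_neg (by rw [length_idPerm]; omega), length_idPerm]
    -- split the reversed range
    have hsplit : (List.range (k*(m+1))).reverse
        = (List.map (fun j => i₀+1+j) (List.range (k*(m+1) - (i₀+1)))).reverse
          ++ (i₀ :: (List.range i₀).reverse) := by
      conv_lhs => rw [show k*(m+1) = (i₀+1) + (k*(m+1) - (i₀+1)) by omega]
      rw [List.range_add, List.reverse_append, List.range_succ, List.reverse_append]
      simp
    rw [hsplit, List.flatMap_append, List.flatMap_cons]
    -- π is not in the earlier blocks
    have hnotmem : π ∉ ((List.map (fun j => i₀+1+j) (List.range (k*(m+1) - (i₀+1)))).reverse.flatMap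
        (fun i => (RecAux k m (rhoSub k (idPerm (m+1)) (i + 1))).map
          (fun q => q ++ [(rho k (idPerm (m+1))).getD i (0, 0)]))) := by
      intro hmem
      rw [List.mem_flatMap] at hmem
      obtain ⟨i, hi, hmem⟩ := hmem
      have hirange : i₀ < i ∧ i < k*(m+1) := by
        rw [List.mem_reverse, List.mem_map] at hi
        obtain ⟨j, hj, rfl⟩ := hi
        rw [List.mem_range] at hj
        omega
      rw [List.mem_map] at hmem
      obtain ⟨q, hq, hqe⟩ := hmem
      have hlast : (rho k (idPerm (m+1))).getD i (0,0) = x := by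
        have h1 := congrArg List.getLast? hqe
        rw [List.getLast?_concat] at h1
        have h2 : π.getLast? = some x := by
          conv_lhs => rw [hsplitπ]
          exact List.getLast?_concat
        rw [h2] at h1
        exact Option.some.inj h1
      rw [rho_idPerm_getD k (m+1) hirange.2] at hlast
      have hd : i / (m+1) < k := Nat.div_lt_of_lt_mul (by rw [mul_comm]; exact hirange.2)
      have hm' : i % (m+1) < m+1 := Nat.mod_lt _ (by omega)
      have heq := Nat.div_add_mod i (m+1)
      have hv : i % (m+1) + 1 = x.1 := congrArg Prod.fst hlast
      have hcc : k - 1 - i/(m+1) = x.2 := congrArg Prod.snd hlast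
      have hdd : k - 1 - x.2 = i/(m+1) := by omega
      have hii : i₀ = (m+1) * (i/(m+1)) + i%(m+1) := by
        rw [hi₀def, hdd, mul_comm (i/(m+1)) (m+1)]
        omega
      omega
    rw [indexOf_append_of_not_mem' hnotmem]
    -- length of the earlier blocks
    have hlenA : (((List.map (fun j => i₀+1+j) (List.range (k*(m+1) - (i₀+1)))).reverse.flatMap
        (fun i => (RecAux k m (rhoSub k (idPerm (m+1)) (i + 1))).map
          (fun q => q ++ [(rho k (idPerm (m+1))).getD i (0, 0)])))).length
        = (k*(m+1) - (i₀+1)) * (k^m * m.factorial) := by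
      rw [List.length_flatMap]
      have hc : ∀ i : ℕ, (List.length ∘ (fun i => (RecAux k m (rhoSub k (idPerm (m+1)) (i + 1))).map
          (fun q => q ++ [(rho k (idPerm (m+1))).getD i (0, 0)]))) i = k^m * m.factorial := by
        intro i
        simp only [Function.comp, List.length_map]
        exact length_recAux k m _ (by rw [length_rhoSub, length_idPerm]; omega) hm1
      rw [show (fun i => ((RecAux k m (rhoSub k (idPerm (m+1)) (i + 1))).map (fun q => q ++ [(rho k (idPerm (m+1))).getD i (0, 0)])).length) = fun _ => k ^ m * m.factorial from funext hc, List.map_const', List.sum_replicate]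
      simp
    -- π is in block i₀, with prefix π.take m
    have hrot := rhoSub_snoc_vals k hk (idPerm (m+1)) (by rw [length_idPerm]; omega)
      (by rw [length_idPerm]; exact hi₀)
    rw [length_idPerm] at hrot
    have hvalsπ : (π.take m).map Prod.fst ++ [x.1] = π.map Prod.fst := by
      conv_rhs => rw [hsplitπ]
      simp
    have hvalsρ : (rhoSub k (idPerm (m+1)) (i₀+1)).map Prod.fst ++ [x.1]
        = ((idPerm (m+1)).map Prod.fst).rotate ((i₀+1) % (m+1)) := by
      rw [← hrot, List.map_append, hri₀]
      simp
    have htakeperm : ((π.take m).map Prod.fst).Perm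
        ((rhoSub k (idPerm (m+1)) (i₀+1)).map Prod.fst) := by
      rw [← List.perm_append_right_iff [x.1], hvalsπ, hvalsρ]
      refine hperm.trans ?_
      refine List.Perm.trans ?_ (List.rotate_perm _ _).symm
      rw [vals_idPerm]
    have hπmem : π ∈ (RecAux k m (rhoSub k (idPerm (m+1)) (i₀+1))).map
        (fun q => q ++ [(rho k (idPerm (m+1))).getD i₀ (0,0)]) := by
      rw [List.mem_map]
      refine ⟨π.take m, ?_, by rw [hri₀, ← hsplitπ]⟩
      refine recAux_complete k hk m _ _ (by rw [length_rhoSub, length_idPerm]; omega) ?_ htakeperm ?_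
      · rw [List.length_take]; omega
      · intro y hy
        exact hcol y (List.mem_of_mem_take hy)
    rw [indexOf_append_of_mem' hπmem]
    -- index within block i₀
    have hidx1 : ((RecAux k m (rhoSub k (idPerm (m+1)) (i₀+1))).map
          (fun q => q ++ [(rho k (idPerm (m+1))).getD i₀ (0,0)])).idxOf π
        = (RecAux k m (rhoSub k (idPerm (m+1)) (i₀+1))).idxOf (π.take m) := by
      have hπg : π = (fun q => q ++ [(rho k (idPerm (m+1))).getD i₀ (0,0)]) (π.take m) := by
        simp only []
        rw [hri₀, ← hsplitπ]
      conv_lhs => rw [hπg]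
      exact indexOf_map_of_inj (fun q => q ++ [(rho k (idPerm (m+1))).getD i₀ (0,0)])
        (RecAux k m (rhoSub k (idPerm (m+1)) (i₀+1))) (π.take m)
        (fun b _ hb => (List.append_left_inj _).mp hb)
    rw [hidx1]
    -- relabelling: the right-hand rank
    set f : ℕ → ℕ := fun u => (u + (m+1) - x.1) % (m+1) with hf
    set s : ℕ → ℕ := fun u => if u < x.1 then k - x.2 else k - x.2 - 1 with hs
    have hρmap : (rhoSub k (idPerm (m+1)) (i₀+1)).map (phiMap k f s) = idPerm m := by
      have := rhoSub_idPerm_map k (m+1) x.1 x.2 hk (by omega) hxv.1 hxv.2 hxc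
      simpa using this
    have hrhsfun : (π.take m).map (fun y =>
          ((y.1 + (m+1) - x.1) % (m+1),
            if y.1 < x.1 then (y.2 + k - x.2) % k else (y.2 + k - x.2 - 1) % k))
        = (π.take m).map (phiMap k f s) := by
      apply List.map_congr_left
      intro y _
      simp only [phiMap, hf, hs]
      congr 1
      by_cases hy : y.1 < x.1
      · rw [if_pos hy, if_pos hy]
        congr 1
        omega
      · rw [if_neg hy, if_neg hy]
        congr 1
        omega
    have hrank2 : rankL k m ((π.take m).map (fun y =>
          ((y.1 + (m+1) - x.1) % (m+1),
            if y.1 < x.1 then (y.2 + k - x.2) % k else (y.2 + k - x.2 - 1) % k)))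
        = (RecAux k m (rhoSub k (idPerm (m+1)) (i₀+1))).idxOf (π.take m) + 1 := by
      rw [rankL, RecList, length_idPerm, hrhsfun]
      congr 1
      rw [← hρmap, recAux_map k hk f s]
      refine indexOf_map_of_inj _ _ _ ?_
      intro b hb hbe
      obtain ⟨hbperm, hbcol⟩ := recAux_mem k hk m _ b (by rw [length_rhoSub, length_idPerm]; omega) hb
      -- properties of values in the rotate list
      have hrotmem : ∀ u ∈ (rhoSub k (idPerm (m+1)) (i₀+1)).map Prod.fst,
          1 ≤ u ∧ u ≤ m + 1 := by
        intro u hu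
        have hu2 : u ∈ ((idPerm (m+1)).map Prod.fst).rotate ((i₀+1) % (m+1)) := by
          rw [← hvalsρ]
          exact List.mem_append_left _ hu
        have := (List.rotate_perm _ _).mem_iff.mp hu2
        rw [vals_idPerm] at this
        simp only [List.mem_map, List.mem_range] at this
        obtain ⟨i, hi, rfl⟩ := this
        omega
      refine map_eq_map_inj_on (phiMap k f s) b (π.take m) ?_ hbe
      intro y hy z hz hyz
      have hymem : y.1 ∈ (rhoSub k (idPerm (m+1)) (i₀+1)).map Prod.fst :=
        hbperm.mem_iff.mp (List.mem_map_of_mem hy)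
      have hyv := hrotmem y.1 hymem
      have hzmem : z ∈ π := List.mem_of_mem_take hz
      have hzv : 1 ≤ z.1 ∧ z.1 ≤ m + 1 := by
        have hz1 : z.1 ∈ π.map Prod.fst := List.mem_map_of_mem hzmem
        have := hperm.mem_iff.mp hz1
        simp only [List.mem_map, List.mem_range] at this
        obtain ⟨i, hi, hie⟩ := this
        omega
      exact phi_inj k (m+1) x.1 hk hxv.2 s y z hyv.1 hyv.2 (hbcol y hy)
        hzv.1 hzv.2 (hcol z hzmem) hyz
    rw [hrank2, hlenA]
    -- final arithmetic
    have hcount : k*(m+1) - (i₀+1) = (m+1) * (x.2+1) - x.1 := by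
      have h1 : i₀ = e*(m+1) + (x.1 - 1) := by rw [hi₀def, he1]
      have h2 : (m+1) * (x.2+1) = x.2*(m+1) + (m+1) := by ring
      omega
    rw [hcount]
    omega
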